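/- Let G be a finite graph with q edges such that every permutation of the edge set E(G) is induced by a graph automorphism of G (i.e., the natural map from Aut(G) to Sym(E(G)) is surjective), G is connected, and q ≥ 2. Then G is isomorphic to the 3-cycle C_3 or to the star K_{1,q}. -/

import Mathlib

open SimpleGraph

private lemma walkEnd' {V : Type*} {G : SimpleGraph V}
    (h1 : ∀ ⦃x y w : V⦄, G.Adj x y → G.Adj x w → y = w) :
    ∀ {x z : V}, G.Walk x z → ∀ {y : V}, G.Adj x y → z = x ∨ z = y := by
  intro x z p
  induction p with
  | nil => intro y _; exact Or.inl rfl
  | @cons a b c h p ih =>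
    intro y hxy
    have hb : b = y := h1 h hxy
    subst hb
    rcases ih h.symm with h' | h'
    · exact Or.inr h'
    · exact Or.inl h'

theorem stmt12 {V : Type*} [Fintype V] (q : ℕ) (G : SimpleGraph V)
    (hconn : G.Connected) (hq : Nat.card G.edgeSet = q) (hq2 : 2 ≤ q)
    (hsurj : ∀ σ : Equiv.Perm G.edgeSet, ∃ κ : G ≃g G, ∀ e, κ.mapEdgeSet e = σ e) :
    Nonempty (G ≃g SimpleGraph.cycleGraph 3) ∨
      Nonempty (G ≃g completeBipartiteGraph (Fin 1) (Fin q)) := by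
  classical
  -- every vertex other than a given one has a neighbor
  have hnb : ∀ v x : V, v ≠ x → ∃ w, G.Adj v w := by
    intro v x hv
    obtain ⟨p⟩ := hconn.preconnected v x
    cases p with
    | nil => exact absurd rfl hv
    | cons h _ => exact ⟨_, h⟩
  -- Step 1: any two edges share a vertex
  have key : ∀ e ∈ G.edgeSet, ∀ f ∈ G.edgeSet, ∃ v, v ∈ e ∧ v ∈ f := by
    intro e he f hf
    by_contra hno
    push_neg at hno
    have hef : e ≠ f := by
      rintro rfl
      induction e with
      | _ a b => exact hno a (Sym2.mem_mk_left a b) (Sym2.mem_mk_left a b)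
    -- find a vertex with two distinct neighbors
    have hdeg : ∃ (w p r : V), G.Adj w p ∧ G.Adj w r ∧ p ≠ r := by
      by_contra hd
      push_neg at hd
      have h1 : ∀ ⦃x y w : V⦄, G.Adj x y → G.Adj x w → y = w :=
        fun x y w h h' => hd x y w h h'
      induction e with
      | _ a b =>
        induction f with
        | _ u v =>
          have hab : G.Adj a b := he
          have hu : u ∈ s(u, v) := Sym2.mem_mk_left u v
          have hune : u ∉ s(a, b) := fun h => hno u h hu
          obtain ⟨p⟩ := hconn.preconnected a u
          rcases walkEnd' h1 p hab with h' | h'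
          · exact hune (h' ▸ Sym2.mem_mk_left a b)
          · exact hune (h' ▸ Sym2.mem_mk_right a b)
    obtain ⟨w, p, r, hwp, hwr, hpr⟩ := hdeg
    have hane : s(w, p) ≠ s(w, r) := fun h => hpr (Sym2.congr_right.mp h)
    set A : G.edgeSet := ⟨s(w, p), hwp⟩ with hA
    set B : G.edgeSet := ⟨s(w, r), hwr⟩ with hB
    set E : G.edgeSet := ⟨e, he⟩ with hE
    set F : G.edgeSet := ⟨f, hf⟩ with hF
    have hAB : A ≠ B := fun h => hane (congrArg Subtype.val h)
    have hEF : E ≠ F := fun h => hef (congrArg Subtype.val h)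
    set τ := Equiv.swap A E with hτ
    have hτB : E ≠ τ B := by
      intro h
      exact hAB (τ.injective (by rw [← h, hτ, Equiv.swap_apply_left]))
    set σ := τ.trans (Equiv.swap (τ B) F) with hσ
    have hσA : σ A = E := by
      rw [hσ, Equiv.trans_apply, hτ, Equiv.swap_apply_left]
      exact Equiv.swap_apply_of_ne_of_ne hτB hEF
    have hσB : σ B = F := by
      rw [hσ, Equiv.trans_apply, Equiv.swap_apply_left]
    obtain ⟨κ, hκ⟩ := hsurj σ
    have hmapA : Sym2.map κ (s(w, p)) = e := by
      have := hκ A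
      rw [hσA] at this
      exact congrArg Subtype.val this
    have hmapB : Sym2.map κ (s(w, r)) = f := by
      have := hκ B
      rw [hσB] at this
      exact congrArg Subtype.val this
    refine hno (κ w) ?_ ?_
    · rw [← hmapA, Sym2.map_pair_eq]; exact Sym2.mem_mk_left _ _
    · rw [← hmapB, Sym2.map_pair_eq]; exact Sym2.mem_mk_left _ _
  -- two distinct edges
  have hnt : Nontrivial G.edgeSet :=
    Finite.one_lt_card_iff_nontrivial.mp (by rw [hq]; omega)
  obtain ⟨E1, E2, hE12⟩ := hnt.exists_pair_ne
  obtain ⟨x, hx1, hx2⟩ := key E1.1 E1.2 E2.1 E2.2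
  set y := Sym2.Mem.other hx1 with hy
  set z := Sym2.Mem.other hx2 with hz
  have he1s : s(x, y) = E1.1 := Sym2.other_spec hx1
  have he2s : s(x, z) = E2.1 := Sym2.other_spec hx2
  have he1 : G.Adj x y := by rw [← SimpleGraph.mem_edgeSet, he1s]; exact E1.2
  have he2 : G.Adj x z := by rw [← SimpleGraph.mem_edgeSet, he2s]; exact E2.2
  have hyz : y ≠ z := by
    intro h
    exact hE12 (Subtype.ext (by rw [← he1s, ← he2s, h]))
  have hxy : x ≠ y := G.ne_of_adj he1
  have hxz : x ≠ z := G.ne_of_adj he2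
  by_cases hstar : ∀ e ∈ G.edgeSet, x ∈ e
  · -- star case
    right
    have hadjx : ∀ v : V, v ≠ x → G.Adj x v := by
      intro v hv
      obtain ⟨w, hvw⟩ := hnb v x hv
      have hx : x ∈ s(v, w) := hstar _ hvw
      rcases Sym2.mem_iff.mp hx with h | h
      · exact absurd h.symm hv
      · exact (h ▸ hvw).symm
    have ψbij : Function.Bijective
        (fun v : {v : V // v ≠ x} => (⟨s(x, v.1), hadjx v.1 v.2⟩ : G.edgeSet)) := by
      constructor
      · intro a b hab
        exact Subtype.ext (Sym2.congr_right.mp (congrArg Subtype.val hab))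
      · rintro ⟨e, he⟩
        have hxe : x ∈ e := hstar e he
        have hne : Sym2.Mem.other hxe ≠ x :=
          Sym2.other_ne (G.not_isDiag_of_mem_edgeSet he) hxe
        exact ⟨⟨Sym2.Mem.other hxe, hne⟩, Subtype.ext (Sym2.other_spec hxe)⟩
    obtain ⟨ρ⟩ : Nonempty ({v : V // v ≠ x} ≃ Fin q) := by
      refine Finite.card_eq.mp ?_
      rw [Nat.card_congr (Equiv.ofBijective _ ψbij), hq, Nat.card_eq_fintype_card,
        Fintype.card_fin]
    refine ⟨⟨⟨fun v => if h : v = x then Sum.inl 0 else Sum.inr (ρ ⟨v, h⟩),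
      fun s => Sum.elim (fun _ => x) (fun j => (ρ.symm j).1) s, ?_, ?_⟩, ?_⟩⟩
    · intro v
      by_cases h : v = x
      · subst h; simp
      · simp [h]
    · rintro (i | j)
      · simp only [dif_pos, Sum.elim_inl]
        simp [Subsingleton.elim i 0]
      · simp only [Sum.elim_inr, dif_neg (ρ.symm j).2]
        simp [(ρ.symm j).2]
    · intro u v
      simp only [Equiv.coe_fn_mk]
      by_cases hu : u = x <;> by_cases hv : v = x
      · subst hu; subst hv
        simp
      · subst hu
        rw [dif_pos rfl, dif_neg hv]
        simpa using hadjx v hv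
      · subst hv
        rw [dif_pos rfl, dif_neg hu]
        simp only [completeBipartiteGraph_adj]
        simpa using (hadjx u hu).symm
      · rw [dif_neg hu, dif_neg hv]
        refine iff_of_false (by simp) fun hadj => ?_
        rcases Sym2.mem_iff.mp (hstar _ hadj) with h | h
        · exact hu h.symm
        · exact hv h.symm
  · -- triangle case
    left
    push_neg at hstar
    obtain ⟨e3, he3, hx3⟩ := hstar
    have hy3 : y ∈ e3 := by
      obtain ⟨v, hv1, hv3⟩ := key E1.1 E1.2 e3 he3
      rw [← he1s] at hv1
      rcases Sym2.mem_iff.mp hv1 with h | h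
      · exact absurd (h ▸ hv3) hx3
      · exact h ▸ hv3
    have hz3 : z ∈ e3 := by
      obtain ⟨v, hv2, hv3⟩ := key E2.1 E2.2 e3 he3
      rw [← he2s] at hv2
      rcases Sym2.mem_iff.mp hv2 with h | h
      · exact absurd (h ▸ hv3) hx3
      · exact h ▸ hv3
    have he3s : s(y, z) = e3 := by
      have := Sym2.other_spec hy3
      rcases Sym2.mem_iff.mp (this ▸ hz3) with h | h
      · exact absurd h.symm hyz
      · rw [← h] at this; exact this
    have he3' : G.Adj y z := by rw [← SimpleGraph.mem_edgeSet, he3s]; exact he3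
    -- classify all edges
    have hE : ∀ e ∈ G.edgeSet, e = s(x, y) ∨ e = s(x, z) ∨ e = s(y, z) := by
      intro e4 he4
      by_cases hx4 : x ∈ e4
      · have hds := Sym2.other_spec hx4
        set d := Sym2.Mem.other hx4 with hd
        obtain ⟨v, hv4, hv3⟩ := key e4 he4 e3 he3
        rw [← he3s] at hv3
        rw [← hds] at hv4
        rcases Sym2.mem_iff.mp hv4 with h | h
        · subst h
          rcases Sym2.mem_iff.mp hv3 with h' | h'
          · exact absurd h' hxy
          · exact absurd h' hxz
        · subst h
          rcases Sym2.mem_iff.mp hv3 with h' | h'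
          · left; rw [← hds, h']
          · right; left; rw [← hds, h']
      · have hy4 : y ∈ e4 := by
          obtain ⟨v, hv1, hv4⟩ := key E1.1 E1.2 e4 he4
          rw [← he1s] at hv1
          rcases Sym2.mem_iff.mp hv1 with h | h
          · exact absurd (h ▸ hv4) hx4
          · exact h ▸ hv4
        have hz4 : z ∈ e4 := by
          obtain ⟨v, hv2, hv4⟩ := key E2.1 E2.2 e4 he4
          rw [← he2s] at hv2
          rcases Sym2.mem_iff.mp hv2 with h | h
          · exact absurd (h ▸ hv4) hx4
          · exact h ▸ hv4
        right; right
        have := Sym2.other_spec hy4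
        rcases Sym2.mem_iff.mp (this ▸ hz4) with h | h
        · exact absurd h.symm hyz
        · rw [← h] at this; exact this.symm
    -- all vertices are x, y or z
    have hV : ∀ v : V, v = x ∨ v = y ∨ v = z := by
      intro v
      by_cases hvx : v = x
      · exact Or.inl hvx
      obtain ⟨w, hvw⟩ := hnb v x hvx
      have hv : v ∈ s(v, w) := Sym2.mem_mk_left v w
      rcases hE s(v, w) hvw with h | h | h <;> rw [h] at hv <;>
        rcases Sym2.mem_iff.mp hv with h' | h'
      · exact Or.inl h'
      · exact Or.inr (Or.inl h')
      · exact Or.inl h'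
      · exact Or.inr (Or.inr h')
      · exact Or.inr (Or.inl h')
      · exact Or.inr (Or.inr h')
    have hAdj : ∀ u v : V, u ≠ v → G.Adj u v := by
      intro u v huv
      rcases hV u with rfl | rfl | rfl <;> rcases hV v with rfl | rfl | rfl <;>
        first
          | exact absurd rfl huv
          | exact he1 | exact he1.symm
          | exact he2 | exact he2.symm
          | exact he3' | exact he3'.symm
    have hyx : y ≠ x := hxy.symm
    have hzx : z ≠ x := hxz.symm
    have hzy : z ≠ y := hyz.symm
    refine ⟨⟨⟨fun v => if v = x then 0 else if v = y then 1 else 2,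
      fun i => ![x, y, z] i, ?_, ?_⟩, ?_⟩⟩
    · intro v
      rcases hV v with rfl | rfl | rfl
      · simp
      · simp [hyx]
      · simp [hzx, hzy]
    · intro i
      fin_cases i <;> simp [hyx, hzx, hzy]
    · intro u v
      rw [SimpleGraph.cycleGraph_three_eq_top, SimpleGraph.top_adj]
      simp only [Equiv.coe_fn_mk]
      constructor
      · intro h
        refine hAdj u v fun huv => h ?_
        rw [huv]
      · intro h
        rcases hV u with rfl | rfl | rfl <;> rcases hV v with rfl | rfl | rfl <;>
          simp [hyx, hzx, hzy, hxy, hxz, hyz] at h ⊢
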